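/- Let (X,d) be a compact metric space and let (q_i) be a strictly increasing sequence of positive integers with q_{i+1} - q_i ≤ M for all i, for some fixed M. Then a continuous map f : X → X is distributionally chaotic if and only if f is distributionally chaotic in the sequence (q_i). -/

import Mathlib

open Filter Set
open scoped Classical

/-- Lower density of times `i < n` with `dist (f^[i] x) (f^[i] y) < t`. -/
noncomputable def ldens {X : Type*} [MetricSpace X] (f : X → X) (x y : X) (t : ℝ) : ℝ :=
  Filter.liminf (fun n : ℕ =>
    (((Finset.range n).filter (fun i => dist (f^[i] x) (f^[i] y) < t)).card : ℝ) / n)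
    Filter.atTop

/-- Upper density of times `i < n` with `dist (f^[i] x) (f^[i] y) < t`. -/
noncomputable def udens {X : Type*} [MetricSpace X] (f : X → X) (x y : X) (t : ℝ) : ℝ :=
  Filter.limsup (fun n : ℕ =>
    (((Finset.range n).filter (fun i => dist (f^[i] x) (f^[i] y) < t)).card : ℝ) / n)
    Filter.atTop

/-- Lower density along the sequence of times `q i`. -/
noncomputable def ldensSeq {X : Type*} [MetricSpace X] (f : X → X) (q : ℕ → ℕ)
    (x y : X) (t : ℝ) : ℝ :=
  Filter.liminf (fun n : ℕ =>
    (((Finset.range n).filter (fun i => dist (f^[q i] x) (f^[q i] y) < t)).card : ℝ) / n)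
    Filter.atTop

/-- Upper density along the sequence of times `q i`. -/
noncomputable def udensSeq {X : Type*} [MetricSpace X] (f : X → X) (q : ℕ → ℕ)
    (x y : X) (t : ℝ) : ℝ :=
  Filter.limsup (fun n : ℕ =>
    (((Finset.range n).filter (fun i => dist (f^[q i] x) (f^[q i] y) < t)).card : ℝ) / n)
    Filter.atTop

/-- f is distributionally chaotic (DC1). -/
def DC1 {X : Type*} [MetricSpace X] (f : X → X) : Prop :=
  ∃ S : Set X, ¬ S.Countable ∧ ∀ x ∈ S, ∀ y ∈ S, x ≠ y →
    (∃ ε : ℝ, 0 < ε ∧ ldens f x y ε = 0) ∧ ∀ t : ℝ, 0 < t → udens f x y t = 1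

/-- f is distributionally chaotic in the sequence q. -/
def SDCin {X : Type*} [MetricSpace X] (f : X → X) (q : ℕ → ℕ) : Prop :=
  ∃ S : Set X, ¬ S.Countable ∧ ∀ x ∈ S, ∀ y ∈ S, x ≠ y →
    (∃ ε : ℝ, 0 < ε ∧ ldensSeq f q x y ε = 0) ∧ ∀ t : ℝ, 0 < t → udensSeq f q x y t = 1

/-! ### Auxiliary counting functions -/

noncomputable def cnt {X : Type*} [MetricSpace X] (f : X → X) (x y : X) (t : ℝ) (n : ℕ) : ℕ :=
  ((Finset.range n).filter (fun i => dist (f^[i] x) (f^[i] y) < t)).card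

noncomputable def cntQ {X : Type*} [MetricSpace X] (f : X → X) (q : ℕ → ℕ) (x y : X)
    (t : ℝ) (K : ℕ) : ℕ :=
  ((Finset.range K).filter (fun k => dist (f^[q k] x) (f^[q k] y) < t)).card

section Aux

variable {X : Type*} [MetricSpace X] (f : X → X) (x y : X) (q : ℕ → ℕ)

lemma ldens_eq (t : ℝ) :
    ldens f x y t = Filter.liminf (fun n : ℕ => (cnt f x y t n : ℝ) / n) Filter.atTop := rfl

lemma udens_eq (t : ℝ) :
    udens f x y t = Filter.limsup (fun n : ℕ => (cnt f x y t n : ℝ) / n) Filter.atTop := rfl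

lemma ldensSeq_eq (t : ℝ) :
    ldensSeq f q x y t = Filter.liminf (fun K : ℕ => (cntQ f q x y t K : ℝ) / K)
      Filter.atTop := rfl

lemma udensSeq_eq (t : ℝ) :
    udensSeq f q x y t = Filter.limsup (fun K : ℕ => (cntQ f q x y t K : ℝ) / K)
      Filter.atTop := rfl

lemma cnt_le (t : ℝ) (n : ℕ) : cnt f x y t n ≤ n :=
  (Finset.card_filter_le _ _).trans_eq (Finset.card_range n)

lemma cntQ_le (t : ℝ) (K : ℕ) : cntQ f q x y t K ≤ K :=
  (Finset.card_filter_le _ _).trans_eq (Finset.card_range K)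

lemma frac_nonneg (c : ℕ → ℕ) (n : ℕ) : (0:ℝ) ≤ (c n : ℝ) / n := by positivity

lemma frac_le_one (c : ℕ → ℕ) (h : ∀ n, c n ≤ n) (n : ℕ) : (c n : ℝ) / n ≤ 1 := by
  rcases Nat.eq_zero_or_pos n with h0 | h0
  · simp [h0]
  · rw [div_le_one (by exact_mod_cast h0)]
    exact_mod_cast h n

lemma card_filter_neg (s : Finset ℕ) (p : ℕ → Prop) [DecidablePred p] :
    (s.filter (fun i => ¬ p i)).card = s.card - (s.filter p).card := by
  have := Finset.card_filter_add_card_filter_not (s := s) (p := p)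
  omega

/-! ### Real liminf/limsup helpers -/

lemma liminf_zero_of_freq (a : ℕ → ℝ) (h0 : ∀ n, 0 ≤ a n) (h1 : ∀ n, a n ≤ 1)
    (h : ∀ η : ℝ, 0 < η → ∃ᶠ n in atTop, a n ≤ η) : Filter.liminf a Filter.atTop = 0 := by
  have hb : Filter.IsBoundedUnder (· ≥ ·) Filter.atTop a :=
    Filter.isBoundedUnder_of ⟨0, fun n => h0 n⟩
  have hb' : Filter.IsBoundedUnder (· ≤ ·) Filter.atTop a :=
    Filter.isBoundedUnder_of ⟨1, fun n => h1 n⟩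
  have h2 : 0 ≤ Filter.liminf a Filter.atTop :=
    Filter.le_liminf_of_le hb'.isCoboundedUnder_ge (Eventually.of_forall h0)
  have h1 : ∀ η : ℝ, 0 < η → Filter.liminf a Filter.atTop ≤ η := fun η hη =>
    Filter.liminf_le_of_frequently_le (h η hη) hb
  by_contra hne
  have hlt : 0 < Filter.liminf a Filter.atTop := lt_of_le_of_ne h2 (Ne.symm hne)
  have := h1 (Filter.liminf a Filter.atTop / 2) (by linarith)
  linarith

lemma limsup_one_of_freq (a : ℕ → ℝ) (h0 : ∀ n, 0 ≤ a n) (h1 : ∀ n, a n ≤ 1)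
    (h : ∀ η : ℝ, 0 < η → ∃ᶠ n in atTop, 1 - η ≤ a n) : Filter.limsup a Filter.atTop = 1 := by
  have hb : Filter.IsBoundedUnder (· ≤ ·) Filter.atTop a :=
    Filter.isBoundedUnder_of ⟨1, fun n => h1 n⟩
  have hb' : Filter.IsBoundedUnder (· ≥ ·) Filter.atTop a :=
    Filter.isBoundedUnder_of ⟨0, fun n => h0 n⟩
  have h2 : Filter.limsup a Filter.atTop ≤ 1 :=
    Filter.limsup_le_of_le hb'.isCoboundedUnder_le (Eventually.of_forall h1)
  have h3 : ∀ η : ℝ, 0 < η → 1 - η ≤ Filter.limsup a Filter.atTop := fun η hη =>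
    Filter.le_limsup_of_frequently_le (h η hη) hb
  by_contra hne
  have hlt : Filter.limsup a Filter.atTop < 1 := lt_of_le_of_ne h2 hne
  have := h3 ((1 - Filter.limsup a Filter.atTop) / 2) (by linarith)
  linarith

lemma freq_of_liminf_zero (a : ℕ → ℝ) (h1 : ∀ n, a n ≤ 1)
    (hl : Filter.liminf a Filter.atTop = 0) {η : ℝ} (hη : 0 < η) :
    ∃ᶠ n in atTop, a n < η := by
  by_contra hc
  rw [Filter.not_frequently] at hc
  have hev : ∀ᶠ n in atTop, η ≤ a n := hc.mono fun n hn => not_lt.mp hn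
  have hb : Filter.IsBoundedUnder (· ≤ ·) Filter.atTop a :=
    Filter.isBoundedUnder_of ⟨1, fun n => h1 n⟩
  have : η ≤ Filter.liminf a Filter.atTop :=
    Filter.le_liminf_of_le hb.isCoboundedUnder_ge hev
  rw [hl] at this; linarith

lemma freq_of_limsup_one (a : ℕ → ℝ) (h0 : ∀ n, 0 ≤ a n)
    (hl : Filter.limsup a Filter.atTop = 1) {η : ℝ} (hη : 0 < η) :
    ∃ᶠ n in atTop, 1 - η < a n := by
  by_contra hc
  rw [Filter.not_frequently] at hc
  have hev : ∀ᶠ n in atTop, a n ≤ 1 - η := hc.mono fun n hn => not_lt.mp hn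
  have hb : Filter.IsBoundedUnder (· ≥ ·) Filter.atTop a :=
    Filter.isBoundedUnder_of ⟨0, fun n => h0 n⟩
  have : Filter.limsup a Filter.atTop ≤ 1 - η :=
    Filter.limsup_le_of_le hb.isCoboundedUnder_le hev
  rw [hl] at this; linarith

/-! ### Structure of the sequence q -/

lemma q_le_lin (hq : StrictMono q) {M : ℕ} (hgap : ∀ i, q (i + 1) ≤ q i + M) (k : ℕ) :
    q k ≤ q 0 + M * k := by
  induction k with
  | zero => simp
  | succ k ih =>
    calc q (k + 1) ≤ q k + M := hgap k
    _ ≤ q 0 + M * k + M := by omega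
    _ = q 0 + M * (k + 1) := by ring

/-! ### Counting lemmas -/

/-- Forward direction: the injection `k ↦ q k` maps (good/bad) q-indices below `K`
to (good/bad) times below `n`. -/
lemma count_fwd (hq : StrictMono q) (t : ℝ) (K n : ℕ) (hKn : ∀ k, k < K → q k < n) :
    cntQ f q x y t K ≤ cnt f x y t n ∧
      K - cntQ f q x y t K ≤ n - cnt f x y t n := by
  constructor
  · apply Finset.card_le_card_of_injOn q
    · intro k hk
      simp only [Finset.mem_coe, Finset.mem_filter, Finset.mem_range] at hk ⊢
      exact ⟨hKn k hk.1, hk.2⟩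
    · exact fun a _ b _ h => hq.injective h
  · have e1 : ((Finset.range K).filter
        (fun k => ¬ dist (f^[q k] x) (f^[q k] y) < t)).card = K - cntQ f q x y t K := by
      rw [card_filter_neg (Finset.range K) (fun k => dist (f^[q k] x) (f^[q k] y) < t),
        Finset.card_range]
      rfl
    have e2 : ((Finset.range n).filter
        (fun i => ¬ dist (f^[i] x) (f^[i] y) < t)).card = n - cnt f x y t n := by
      rw [card_filter_neg (Finset.range n) (fun i => dist (f^[i] x) (f^[i] y) < t),
        Finset.card_range]
      rfl
    rw [← e1, ← e2]
    apply Finset.card_le_card_of_injOn q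
    · intro k hk
      simp only [Finset.mem_coe, Finset.mem_filter, Finset.mem_range] at hk ⊢
      exact ⟨hKn k hk.1, hk.2⟩
    · exact fun a _ b _ h => hq.injective h

/-- Reverse direction, bad-times counting (for upper density). -/
lemma count_rev_bad (hq : StrictMono q) {M : ℕ} (hgap : ∀ i, q (i + 1) ≤ q i + M)
    (hM : 1 ≤ M) {δ t : ℝ}
    (huc : ∀ a b : X, dist a b < δ → ∀ j ≤ M, dist (f^[j] a) (f^[j] b) < t)
    (K : ℕ) (hK : 1 ≤ K) :
    q (K - 1) + 1 - cnt f x y t (q (K - 1) + 1) ≤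
      q 0 + M * (K - cntQ f q x y δ K) := by
  set n := q (K - 1) + 1 with hn
  set Bad : Finset ℕ := (Finset.range n).filter
    (fun i => ¬ dist (f^[i] x) (f^[i] y) < t) with hBad
  have hBadcard : Bad.card = n - cnt f x y t n := by
    rw [hBad, card_filter_neg (Finset.range n) (fun i => dist (f^[i] x) (f^[i] y) < t),
      Finset.card_range]
    rfl
  set BadK : Finset ℕ := (Finset.range K).filter
    (fun k => ¬ dist (f^[q k] x) (f^[q k] y) < δ) with hBadK
  have hBadKcard : BadK.card = K - cntQ f q x y δ K := by
    rw [hBadK, card_filter_neg (Finset.range K) (fun k => dist (f^[q k] x) (f^[q k] y) < δ),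
      Finset.card_range]
    rfl
  -- split Bad into small times and the rest
  have hsplit : Bad.card ≤ q 0 + (Bad.filter (fun i => q 0 ≤ i)).card := by
    have hneg : (Bad.filter (fun i => ¬ q 0 ≤ i)).card ≤ q 0 := by
      have hsub : Bad.filter (fun i => ¬ q 0 ≤ i) ⊆ Finset.range (q 0) := by
        intro i hi
        simp only [Finset.mem_filter] at hi
        simp only [Finset.mem_range]
        omega
      have := Finset.card_le_card hsub
      rwa [Finset.card_range] at this
    have hcfn := card_filter_neg Bad (fun i => q 0 ≤ i)
    have hle := Finset.card_filter_le Bad (fun i => q 0 ≤ i)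
    omega
  -- inject Bad ∩ [q 0, n) into BadK × range M
  have hinj : (Bad.filter (fun i => q 0 ≤ i)).card ≤ (BadK ×ˢ Finset.range M).card := by
    apply Finset.card_le_card_of_injOn
      (fun i => (Nat.findGreatest (fun k => q k ≤ i) i, i - q (Nat.findGreatest (fun k => q k ≤ i) i)))
    · intro i hi
      simp only [Finset.mem_coe, Finset.mem_filter, Finset.mem_range, hBad] at hi
      obtain ⟨⟨hin, hbad⟩, hq0⟩ := hi
      have hspec : q (Nat.findGreatest (fun k => q k ≤ i) i) ≤ i :=
        Nat.findGreatest_spec (P := fun k => q k ≤ i) (Nat.zero_le i) hq0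
      have hle : Nat.findGreatest (fun k => q k ≤ i) i ≤ i := Nat.findGreatest_le i
      have hkmK : Nat.findGreatest (fun k => q k ≤ i) i < K := by
        by_contra hc
        push_neg at hc
        have h1 : q K ≤ q (Nat.findGreatest (fun k => q k ≤ i) i) := hq.monotone hc
        have h2 : q (K - 1) < q K := hq (by omega)
        omega
      have hoff : i - q (Nat.findGreatest (fun k => q k ≤ i) i) < M := by
        by_cases hcase : Nat.findGreatest (fun k => q k ≤ i) i = i
        · have h1 : i ≤ q i := hq.le_apply
          rw [hcase] at hspec ⊢
          omega
        · have h2 : ¬ q (Nat.findGreatest (fun k => q k ≤ i) i + 1) ≤ i :=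
            Nat.findGreatest_is_greatest (P := fun k => q k ≤ i) (n := i)
              (by omega) (by omega)
          have h3 := hgap (Nat.findGreatest (fun k => q k ≤ i) i)
          omega
      refine Finset.mem_product.mpr ⟨?_, ?_⟩
      · simp only [hBadK, Finset.mem_filter, Finset.mem_range]
        refine ⟨hkmK, ?_⟩
        intro hgood
        have := huc _ _ hgood (i - q (Nat.findGreatest (fun k => q k ≤ i) i)) (le_of_lt hoff)
        rw [← Function.iterate_add_apply, ← Function.iterate_add_apply,
          Nat.sub_add_cancel hspec] at this
        exact hbad this
      · simp only [Finset.mem_range]; exact hoff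
    · intro i hi j hj hij
      simp only [Finset.mem_coe, Finset.mem_filter, hBad, Finset.mem_range] at hi hj
      have hi' : q (Nat.findGreatest (fun k => q k ≤ i) i) ≤ i :=
        Nat.findGreatest_spec (P := fun k => q k ≤ i) (Nat.zero_le i) hi.2
      have hj' : q (Nat.findGreatest (fun k => q k ≤ j) j) ≤ j :=
        Nat.findGreatest_spec (P := fun k => q k ≤ j) (Nat.zero_le j) hj.2
      have h1 := congrArg Prod.fst hij
      have h2 := congrArg Prod.snd hij
      simp only at h1 h2
      rw [h1] at hi' h2
      omega
  rw [Finset.card_product, Finset.card_range, hBadKcard] at hinj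
  have hm : (K - cntQ f q x y δ K) * M = M * (K - cntQ f q x y δ K) := Nat.mul_comm _ _
  rw [← hBadcard]
  omega

/-- Reverse direction, good-times counting (for lower density). -/
lemma count_rev_good (hq : StrictMono q) {M : ℕ} (hgap : ∀ i, q (i + 1) ≤ q i + M)
    (hM : 1 ≤ M) {ε' ε : ℝ}
    (huc : ∀ a b : X, dist a b < ε' → ∀ j ≤ M, dist (f^[j] a) (f^[j] b) < ε)
    (K : ℕ) (hK : 1 ≤ K) :
    cnt f x y ε' (q (K - 1) + 1) ≤ (q 0 + 1) + M * cntQ f q x y ε K := by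
  set n := q (K - 1) + 1 with hn
  set Good : Finset ℕ := (Finset.range n).filter
    (fun i => dist (f^[i] x) (f^[i] y) < ε') with hGood
  have hGoodcard : Good.card = cnt f x y ε' n := rfl
  set GoodK : Finset ℕ := (Finset.range K).filter
    (fun k => dist (f^[q k] x) (f^[q k] y) < ε) with hGoodK
  have hGoodKcard : GoodK.card = cntQ f q x y ε K := rfl
  have hex : ∀ i : ℕ, ∃ k, i ≤ q k := fun i => ⟨i, hq.le_apply⟩
  have hsplit : Good.card ≤ (q 0 + 1) + (Good.filter (fun i => q 0 < i)).card := by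
    have hneg : (Good.filter (fun i => ¬ q 0 < i)).card ≤ q 0 + 1 := by
      have hsub : Good.filter (fun i => ¬ q 0 < i) ⊆ Finset.range (q 0 + 1) := by
        intro i hi
        simp only [Finset.mem_filter] at hi
        simp only [Finset.mem_range]
        omega
      have := Finset.card_le_card hsub
      rwa [Finset.card_range] at this
    have hcfn := card_filter_neg Good (fun i => q 0 < i)
    have hle := Finset.card_filter_le Good (fun i => q 0 < i)
    omega
  have hinj : (Good.filter (fun i => q 0 < i)).card ≤ (GoodK ×ˢ Finset.range M).card := by
    apply Finset.card_le_card_of_injOn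
      (fun i => (Nat.find (hex i), q (Nat.find (hex i)) - i))
    · intro i hi
      simp only [Finset.mem_coe, Finset.mem_filter, Finset.mem_range, hGood] at hi
      obtain ⟨⟨hin, hgood⟩, hq0⟩ := hi
      have hspec : i ≤ q (Nat.find (hex i)) := Nat.find_spec (hex i)
      have hkp1 : 1 ≤ Nat.find (hex i) := by
        rcases Nat.eq_zero_or_pos (Nat.find (hex i)) with h0 | h0
        · exfalso
          rw [h0] at hspec
          omega
        · exact h0
      have hkpK : Nat.find (hex i) < K := by
        have : Nat.find (hex i) ≤ K - 1 := Nat.find_min' (hex i) (by omega : i ≤ q (K - 1))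
        omega
      have hprev : q (Nat.find (hex i) - 1) < i := by
        have := Nat.find_min (hex i) (m := Nat.find (hex i) - 1) (by omega)
        omega
      have hoff : q (Nat.find (hex i)) - i < M := by
        have h3 : q ((Nat.find (hex i) - 1) + 1) ≤ q (Nat.find (hex i) - 1) + M :=
          hgap (Nat.find (hex i) - 1)
        have h4 : (Nat.find (hex i) - 1) + 1 = Nat.find (hex i) := by omega
        rw [h4] at h3
        omega
      refine Finset.mem_product.mpr ⟨?_, ?_⟩
      · simp only [hGoodK, Finset.mem_filter, Finset.mem_range]
        refine ⟨hkpK, ?_⟩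
        have := huc _ _ hgood (q (Nat.find (hex i)) - i) (le_of_lt hoff)
        rw [← Function.iterate_add_apply, ← Function.iterate_add_apply,
          Nat.sub_add_cancel hspec] at this
        exact this
      · simp only [Finset.mem_range]; exact hoff
    · intro i hi j hj hij
      simp only [Finset.mem_coe, Finset.mem_filter, hGood, Finset.mem_range] at hi hj
      have hi' : i ≤ q (Nat.find (hex i)) := Nat.find_spec (hex i)
      have hj' : j ≤ q (Nat.find (hex j)) := Nat.find_spec (hex j)
      have h1 := congrArg Prod.fst hij
      have h2 := congrArg Prod.snd hij
      simp only at h1 h2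
      rw [h1] at hi' h2
      omega
  rw [Finset.card_product, Finset.card_range, hGoodKcard] at hinj
  have hm : cntQ f q x y ε K * M = M * cntQ f q x y ε K := Nat.mul_comm _ _
  rw [← hGoodcard]
  omega

end Aux

section UC

variable {X : Type*} [MetricSpace X] [CompactSpace X]

lemma uc_window (f : X → X) (hf : Continuous f) (M : ℕ) {t : ℝ} (ht : 0 < t) :
    ∃ δ : ℝ, 0 < δ ∧ ∀ a b : X, dist a b < δ → ∀ j ≤ M, dist (f^[j] a) (f^[j] b) < t := by
  induction M with
  | zero =>
    exact ⟨t, ht, fun a b hab j hj => by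
      interval_cases j
      simpa using hab⟩
  | succ M ih =>
    obtain ⟨δ', hδ'pos, hδ'⟩ := ih
    have hcont : Continuous (f^[M + 1]) := hf.iterate _
    have huc : UniformContinuous (f^[M + 1]) :=
      CompactSpace.uniformContinuous_of_continuous hcont
    obtain ⟨δ'', hδ''pos, hδ''⟩ := Metric.uniformContinuous_iff.mp huc t ht
    refine ⟨min δ' δ'', lt_min hδ'pos hδ''pos, fun a b hab j hj => ?_⟩
    rcases Nat.lt_or_ge j (M + 1) with hj' | hj'
    · exact hδ' a b (lt_of_lt_of_le hab (min_le_left _ _)) j (by omega)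
    · have : j = M + 1 := by omega
      subst this
      exact hδ'' (lt_of_lt_of_le hab (min_le_right _ _))

end UC

section Transfer

variable {X : Type*} [MetricSpace X] [CompactSpace X]
variable (f : X → X) (x y : X) (q : ℕ → ℕ)

/-- Forward transfer: lower density. -/
lemma fwd_liminf (hq : StrictMono q) {M : ℕ} (hgap : ∀ i, q (i + 1) ≤ q i + M)
    (hM : 1 ≤ M) {ε : ℝ} (hld : ldens f x y ε = 0) : ldensSeq f q x y ε = 0 := by
  rw [ldensSeq_eq]
  apply liminf_zero_of_freq _ (fun K => frac_nonneg _ K) (frac_le_one _ (cntQ_le f x y q ε))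
  intro η hη
  have hden : (0:ℝ) < (q 0 : ℝ) + M := by positivity
  set η' : ℝ := η / ((q 0 : ℝ) + M) with hη'
  have hη'pos : 0 < η' := div_pos hη hden
  have hfreq : ∃ᶠ n in atTop, (cnt f x y ε n : ℝ) / n < η' := by
    apply freq_of_liminf_zero _ (frac_le_one _ (cnt_le f x y ε)) _ hη'pos
    rw [← ldens_eq]; exact hld
  rw [Filter.frequently_atTop]
  intro N
  obtain ⟨n, hnN, hn⟩ := Filter.frequently_atTop.mp hfreq (q N + 1)
  have hex : ∀ m : ℕ, ∃ k, m ≤ q k := fun m => ⟨m, hq.le_apply⟩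
  set K := Nat.find (hex n) with hKdef
  have hKspec : n ≤ q K := Nat.find_spec (hex n)
  have hKmin : ∀ k, k < K → q k < n := by
    intro k hk
    have := Nat.find_min (hex n) hk
    omega
  have hNK : N < K := by
    by_contra hc
    push_neg at hc
    have : q K ≤ q N := hq.monotone hc
    omega
  refine ⟨K, by omega, ?_⟩
  have hcount := (count_fwd f x y q hq ε K n hKmin).1
  have hnpos : 0 < n := by omega
  have hKpos : 0 < K := by omega
  have hcntlt : (cnt f x y ε n : ℝ) < η' * n := by
    rw [div_lt_iff₀ (by exact_mod_cast hnpos)] at hn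
    exact hn
  have hqlin : q K ≤ q 0 + M * K := q_le_lin q hq hgap K
  have hnle : (n : ℝ) ≤ (q 0 : ℝ) + M * K := by
    have : n ≤ q 0 + M * K := by omega
    exact_mod_cast this
  have h1 : (cntQ f q x y ε K : ℝ) ≤ η * K := by
    have hc : (cntQ f q x y ε K : ℝ) ≤ (cnt f x y ε n : ℝ) := by exact_mod_cast hcount
    have h2 : (cnt f x y ε n : ℝ) < η' * ((q 0 : ℝ) + M * K) := by
      calc (cnt f x y ε n : ℝ) < η' * n := hcntlt
        _ ≤ η' * ((q 0 : ℝ) + M * K) := by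
            apply mul_le_mul_of_nonneg_left hnle (le_of_lt hη'pos)
    have h3 : η' * ((q 0 : ℝ) + M * K) ≤ η' * (((q 0 : ℝ) + M) * K) := by
      apply mul_le_mul_of_nonneg_left _ (le_of_lt hη'pos)
      have hK1 : (1:ℝ) ≤ K := by exact_mod_cast hKpos
      have hq0 : (0:ℝ) ≤ (q 0 : ℝ) := by positivity
      nlinarith
    have h4 : η' * (((q 0 : ℝ) + M) * K) = η * K := by
      rw [hη']
      field_simp
    linarith
  rw [div_le_iff₀ (by exact_mod_cast hKpos)]
  linarith

/-- Forward transfer: upper density. -/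
lemma fwd_limsup (hq : StrictMono q) {M : ℕ} (hgap : ∀ i, q (i + 1) ≤ q i + M)
    (hM : 1 ≤ M) {t : ℝ} (hud : udens f x y t = 1) : udensSeq f q x y t = 1 := by
  rw [udensSeq_eq]
  apply limsup_one_of_freq _ (fun K => frac_nonneg _ K) (frac_le_one _ (cntQ_le f x y q t))
  intro η hη
  have hden : (0:ℝ) < (q 0 : ℝ) + M := by positivity
  set η' : ℝ := η / ((q 0 : ℝ) + M) with hη'
  have hη'pos : 0 < η' := div_pos hη hden
  have hfreq : ∃ᶠ n in atTop, 1 - η' < (cnt f x y t n : ℝ) / n := by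
    apply freq_of_limsup_one _ (fun n => frac_nonneg _ n) _ hη'pos
    rw [← udens_eq]; exact hud
  rw [Filter.frequently_atTop]
  intro N
  obtain ⟨n, hnN, hn⟩ := Filter.frequently_atTop.mp hfreq (q N + 1)
  have hex : ∀ m : ℕ, ∃ k, m ≤ q k := fun m => ⟨m, hq.le_apply⟩
  set K := Nat.find (hex n) with hKdef
  have hKspec : n ≤ q K := Nat.find_spec (hex n)
  have hKmin : ∀ k, k < K → q k < n := by
    intro k hk
    have := Nat.find_min (hex n) hk
    omega
  have hNK : N < K := by
    by_contra hc
    push_neg at hc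
    have : q K ≤ q N := hq.monotone hc
    omega
  refine ⟨K, by omega, ?_⟩
  have hcount := (count_fwd f x y q hq t K n hKmin).2
  have hnpos : 0 < n := by omega
  have hKpos : 0 < K := by omega
  have hcnt_le_n := cnt_le f x y t n
  have hcntQ_le_K := cntQ_le f x y q t K
  have hbadn : ((n - cnt f x y t n : ℕ) : ℝ) < η' * n := by
    have h1 : (1 - η') * n < (cnt f x y t n : ℝ) := by
      rw [lt_div_iff₀ (by exact_mod_cast hnpos)] at hn
      exact hn
    have h2 : ((n - cnt f x y t n : ℕ) : ℝ) = (n : ℝ) - cnt f x y t n := by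
      rw [Nat.cast_sub hcnt_le_n]
    rw [h2]; nlinarith
  have hqlin : q K ≤ q 0 + M * K := q_le_lin q hq hgap K
  have hnle : (n : ℝ) ≤ (q 0 : ℝ) + M * K := by
    have : n ≤ q 0 + M * K := by omega
    exact_mod_cast this
  have hbadK : ((K - cntQ f q x y t K : ℕ) : ℝ) ≤ η * K := by
    have hc : ((K - cntQ f q x y t K : ℕ) : ℝ) ≤ ((n - cnt f x y t n : ℕ) : ℝ) := by
      exact_mod_cast hcount
    have h3 : η' * ((q 0 : ℝ) + M * K) ≤ η * K := by
      have hK1 : (1:ℝ) ≤ K := by exact_mod_cast hKpos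
      have hq0 : (0:ℝ) ≤ (q 0 : ℝ) := by positivity
      have h4 : η' * (((q 0 : ℝ) + M) * K) = η * K := by
        rw [hη']
        field_simp
      have h35 : ((q 0 : ℝ) + M * K) ≤ ((q 0 : ℝ) + M) * K := by nlinarith
      have h36 := mul_le_mul_of_nonneg_left h35 (le_of_lt hη'pos)
      linarith
    have h5 : η' * (n : ℝ) ≤ η' * ((q 0 : ℝ) + M * K) :=
      mul_le_mul_of_nonneg_left hnle (le_of_lt hη'pos)
    linarith
  rw [le_div_iff₀ (by exact_mod_cast hKpos)]
  have h6 : ((K - cntQ f q x y t K : ℕ) : ℝ) = (K : ℝ) - cntQ f q x y t K := by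
    rw [Nat.cast_sub hcntQ_le_K]
  nlinarith [hbadK, h6]

/-- Reverse transfer: lower density. -/
lemma rev_liminf (hq : StrictMono q) {M : ℕ} (hgap : ∀ i, q (i + 1) ≤ q i + M)
    (hM : 1 ≤ M) {ε ε' : ℝ}
    (huc : ∀ a b : X, dist a b < ε' → ∀ j ≤ M, dist (f^[j] a) (f^[j] b) < ε)
    (hld : ldensSeq f q x y ε = 0) : ldens f x y ε' = 0 := by
  rw [ldens_eq]
  apply liminf_zero_of_freq _ (fun n => frac_nonneg _ n) (frac_le_one _ (cnt_le f x y ε'))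
  intro η hη
  have hMpos : (0:ℝ) < M := by exact_mod_cast hM
  set η' : ℝ := η / (2 * M) with hη'
  have hη'pos : 0 < η' := by positivity
  have hfreq : ∃ᶠ K in atTop, (cntQ f q x y ε K : ℝ) / K < η' := by
    apply freq_of_liminf_zero _ (frac_le_one _ (cntQ_le f x y q ε)) _ hη'pos
    rw [← ldensSeq_eq]; exact hld
  rw [Filter.frequently_atTop]
  intro N
  set Kbig : ℕ := Nat.ceil ((2 * ((q 0 : ℝ) + 1)) / η) with hKbig
  obtain ⟨K, hKN, hK⟩ := Filter.frequently_atTop.mp hfreq (max (max N 1) Kbig)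
  have hK1 : 1 ≤ K := le_trans (le_trans (le_max_right N 1) (le_max_left _ _)) hKN
  have hKN' : N ≤ K := le_trans (le_trans (le_max_left N 1) (le_max_left _ _)) hKN
  have hKbig' : Kbig ≤ K := le_trans (le_max_right _ _) hKN
  set n := q (K - 1) + 1 with hn
  have hnK : K ≤ n := by
    have : K - 1 ≤ q (K - 1) := hq.le_apply
    omega
  refine ⟨n, by omega, ?_⟩
  have hcount := count_rev_good f x y q hq hgap hM huc K hK1
  have hnpos : 0 < n := by omega
  have hKpos : 0 < K := by omega
  have hcntQlt : (cntQ f q x y ε K : ℝ) < η' * K := by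
    rw [div_lt_iff₀ (by exact_mod_cast hKpos)] at hK
    exact hK
  have hq01 : ((q 0 : ℝ) + 1) ≤ (η / 2) * K := by
    have h1 : (2 * ((q 0 : ℝ) + 1)) / η ≤ Kbig := Nat.le_ceil _
    have h2 : (Kbig : ℝ) ≤ K := by exact_mod_cast hKbig'
    rw [div_le_iff₀ hη] at h1
    nlinarith
  have hmain : (cnt f x y ε' n : ℝ) ≤ η * n := by
    have h1 : (cnt f x y ε' n : ℝ) ≤ ((q 0 : ℝ) + 1) + M * cntQ f q x y ε K := by
      have := hcount
      have h2 : (cnt f x y ε' n : ℝ) ≤ ((q 0 + 1 + M * cntQ f q x y ε K : ℕ) : ℝ) := by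
        exact_mod_cast this
      push_cast at h2
      linarith
    have h3 : (M : ℝ) * cntQ f q x y ε K ≤ (η / 2) * K := by
      have : (M : ℝ) * cntQ f q x y ε K ≤ (M : ℝ) * (η' * K) := by
        apply mul_le_mul_of_nonneg_left (le_of_lt hcntQlt) (le_of_lt hMpos)
      have he : (M : ℝ) * (η' * K) = (η / 2) * K := by
        rw [hη']; field_simp
      linarith
    have hKn' : (K : ℝ) ≤ n := by exact_mod_cast hnK
    calc (cnt f x y ε' n : ℝ) ≤ ((q 0 : ℝ) + 1) + M * cntQ f q x y ε K := h1
      _ ≤ (η / 2) * K + (η / 2) * K := by linarith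
      _ = η * K := by ring
      _ ≤ η * n := by nlinarith
  rw [div_le_iff₀ (by exact_mod_cast hnpos)]
  exact hmain

/-- Reverse transfer: upper density. -/
lemma rev_limsup (hq : StrictMono q) {M : ℕ} (hgap : ∀ i, q (i + 1) ≤ q i + M)
    (hM : 1 ≤ M) {δ t : ℝ}
    (huc : ∀ a b : X, dist a b < δ → ∀ j ≤ M, dist (f^[j] a) (f^[j] b) < t)
    (hud : udensSeq f q x y δ = 1) : udens f x y t = 1 := by
  rw [udens_eq]
  apply limsup_one_of_freq _ (fun n => frac_nonneg _ n) (frac_le_one _ (cnt_le f x y t))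
  intro η hη
  have hMpos : (0:ℝ) < M := by exact_mod_cast hM
  set η' : ℝ := η / (2 * M) with hη'
  have hη'pos : 0 < η' := by positivity
  have hfreq : ∃ᶠ K in atTop, 1 - η' < (cntQ f q x y δ K : ℝ) / K := by
    apply freq_of_limsup_one _ (fun K => frac_nonneg _ K) _ hη'pos
    rw [← udensSeq_eq]; exact hud
  rw [Filter.frequently_atTop]
  intro N
  set Kbig : ℕ := Nat.ceil ((2 * ((q 0 : ℝ) + 1)) / η) with hKbig
  obtain ⟨K, hKN, hK⟩ := Filter.frequently_atTop.mp hfreq (max (max N 1) Kbig)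
  have hK1 : 1 ≤ K := le_trans (le_trans (le_max_right N 1) (le_max_left _ _)) hKN
  have hKN' : N ≤ K := le_trans (le_trans (le_max_left N 1) (le_max_left _ _)) hKN
  have hKbig' : Kbig ≤ K := le_trans (le_max_right _ _) hKN
  set n := q (K - 1) + 1 with hn
  have hnK : K ≤ n := by
    have : K - 1 ≤ q (K - 1) := hq.le_apply
    omega
  refine ⟨n, by omega, ?_⟩
  have hcount := count_rev_bad f x y q hq hgap hM huc K hK1
  have hnpos : 0 < n := by omega
  have hKpos : 0 < K := by omega
  have hcnt_le_n := cnt_le f x y t n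
  have hcntQ_le_K := cntQ_le f x y q δ K
  have hbadK : ((K - cntQ f q x y δ K : ℕ) : ℝ) ≤ η' * K := by
    rw [lt_div_iff₀ (by exact_mod_cast hKpos)] at hK
    have h2 : ((K - cntQ f q x y δ K : ℕ) : ℝ) = (K : ℝ) - cntQ f q x y δ K := by
      rw [Nat.cast_sub hcntQ_le_K]
    rw [h2]; nlinarith
  have hq01 : ((q 0 : ℝ) + 1) ≤ (η / 2) * K := by
    have h1 : (2 * ((q 0 : ℝ) + 1)) / η ≤ Kbig := Nat.le_ceil _
    have h2 : (Kbig : ℝ) ≤ K := by exact_mod_cast hKbig'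
    rw [div_le_iff₀ hη] at h1
    nlinarith
  have hmain : ((n : ℝ) - cnt f x y t n) ≤ η * n := by
    have h1 : ((n - cnt f x y t n : ℕ) : ℝ) ≤ (q 0 : ℝ) + M * ((K - cntQ f q x y δ K : ℕ) : ℝ) := by
      have h2 : ((n - cnt f x y t n : ℕ) : ℝ) ≤ ((q 0 + M * (K - cntQ f q x y δ K) : ℕ) : ℝ) := by
        exact_mod_cast hcount
      push_cast at h2
      linarith
    have h3 : (M : ℝ) * ((K - cntQ f q x y δ K : ℕ) : ℝ) ≤ (η / 2) * K := by
      have : (M : ℝ) * ((K - cntQ f q x y δ K : ℕ) : ℝ) ≤ (M : ℝ) * (η' * K) :=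
        mul_le_mul_of_nonneg_left hbadK (le_of_lt hMpos)
      have he : (M : ℝ) * (η' * K) = (η / 2) * K := by
        rw [hη']; field_simp
      linarith
    have hKn' : (K : ℝ) ≤ n := by exact_mod_cast hnK
    have h4 : ((n - cnt f x y t n : ℕ) : ℝ) = (n : ℝ) - cnt f x y t n := by
      rw [Nat.cast_sub hcnt_le_n]
    have hq0 : (q 0 : ℝ) ≤ ((q 0 : ℝ) + 1) := by linarith
    calc (n : ℝ) - cnt f x y t n = ((n - cnt f x y t n : ℕ) : ℝ) := h4.symm
      _ ≤ (q 0 : ℝ) + M * ((K - cntQ f q x y δ K : ℕ) : ℝ) := h1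
      _ ≤ (η / 2) * K + (η / 2) * K := by linarith
      _ = η * K := by ring
      _ ≤ η * n := by nlinarith
  rw [le_div_iff₀ (by exact_mod_cast hnpos)]
  nlinarith

end Transfer

theorem stmt_4 {X : Type*} [MetricSpace X] [CompactSpace X]
    (f : X → X) (hf : Continuous f)
    (q : ℕ → ℕ) (hq : StrictMono q) (hqpos : ∀ i, 0 < q i)
    (M : ℕ) (hgap : ∀ i, q (i + 1) - q i ≤ M) :
    DC1 f ↔ SDCin f q := by
  have hgap' : ∀ i, q (i + 1) ≤ q i + M := by
    intro i
    have h1 := hgap i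
    have h2 : q i < q (i + 1) := hq (by omega)
    omega
  have hM : 1 ≤ M := by
    have h1 := hgap 0
    have h2 : q 0 < q (0 + 1) := hq (by omega)
    omega
  constructor
  · rintro ⟨S, hS, hprop⟩
    refine ⟨S, hS, fun x hx y hy hxy => ?_⟩
    obtain ⟨⟨ε, hε, hld⟩, hud⟩ := hprop x hx y hy hxy
    refine ⟨⟨ε, hε, fwd_liminf f x y q hq hgap' hM hld⟩, fun t ht => ?_⟩
    exact fwd_limsup f x y q hq hgap' hM (hud t ht)
  · rintro ⟨S, hS, hprop⟩
    refine ⟨S, hS, fun x hx y hy hxy => ?_⟩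
    obtain ⟨⟨ε, hε, hld⟩, hud⟩ := hprop x hx y hy hxy
    obtain ⟨ε', hε'pos, hε'⟩ := uc_window f hf M hε
    constructor
    · exact ⟨ε', hε'pos, rev_liminf f x y q hq hgap' hM hε' hld⟩
    · intro t ht
      obtain ⟨δ, hδpos, hδ⟩ := uc_window f hf M ht
      exact rev_limsup f x y q hq hgap' hM hδ (hud δ hδpos)
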